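/- Let i ≤ b ≤ v be natural numbers and let A_i^b(v) denote the inclusion matrix over a field of characteristic zero, whose rows are indexed by i-subsets and columns by b-subsets of {1,...,v}, with entry 1 in position (X,Y) if X ⊆ Y and 0 otherwise. Then A_i^b(v) has full rank. -/
import Mathlib

/-- The inclusion matrix over `ℚ`: rows indexed by `i`-subsets, columns by `b`-subsets
of `{1,…,v}`, with entry `1` when the row set is contained in the column set. -/
def inclusionMatrixQ (v i b : ℕ) :
    Matrix {X : Finset (Fin v) // X.card = i} {Y : Finset (Fin v) // Y.card = b} ℚ :=
  fun X Y => if (X : Finset (Fin v)) ⊆ (Y : Finset (Fin v)) then 1 else 0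

open Finset Matrix

namespace GottliebAux
variable {v : ℕ}

def fiber (v b : ℕ) (X X₀ : Finset (Fin v)) (s : ℕ) : Finset (Finset (Fin v)) :=
  (Finset.univ.powersetCard b).filter (fun Y => X ⊆ Y ∧ (Y ∩ X₀).card = s)

lemma fiber_empty_lt {b : ℕ} {X X₀ : Finset (Fin v)} {s : ℕ}
    (hs : s < (X ∩ X₀).card) : fiber v b X X₀ s = ∅ := by
  ext Y
  simp only [fiber, mem_filter, Finset.notMem_empty, iff_false, not_and]
  intro _ hXY
  intro hcard
  have h1 : X ∩ X₀ ⊆ Y ∩ X₀ := inter_subset_inter hXY Finset.Subset.rfl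
  have := Finset.card_le_card h1
  omega

lemma fiber_empty_gt {i b : ℕ} {X X₀ : Finset (Fin v)} {s : ℕ}
    (hX : X.card = i) (hj : (X ∩ X₀).card ≤ s) (hgt : b < i + (s - (X ∩ X₀).card)) :
    fiber v b X X₀ s = ∅ := by
  ext Y
  simp only [fiber, mem_filter, Finset.notMem_empty, iff_false, not_and]
  intro hYb hXY hcard
  have hYb' : Y.card = b := (Finset.mem_powersetCard_univ).mp hYb
  -- X ∪ (Y ∩ (X₀ \ X)) ⊆ Y with card i + (s - j)
  have hsub : X ∪ (Y ∩ (X₀ \ X)) ⊆ Y := by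
    apply Finset.union_subset hXY (Finset.inter_subset_left)
  have hdisj : Disjoint X (Y ∩ (X₀ \ X)) := by
    apply Finset.disjoint_left.mpr
    intro a ha h2
    simp only [Finset.mem_inter, Finset.mem_sdiff] at h2
    exact h2.2.2 ha
  have heq : Y ∩ (X₀ \ X) = (Y ∩ X₀) \ (X ∩ X₀) := by
    ext a
    simp only [Finset.mem_inter, Finset.mem_sdiff]
    tauto
  have hsubj : X ∩ X₀ ⊆ Y ∩ X₀ := inter_subset_inter hXY Finset.Subset.rfl
  have hc1 : (Y ∩ (X₀ \ X)).card = s - (X ∩ X₀).card := by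
    rw [heq, Finset.card_sdiff_of_subset hsubj, hcard]
  have := Finset.card_le_card hsub
  rw [Finset.card_union_of_disjoint hdisj, hX, hc1, hYb'] at this
  omega


lemma count_formula {i b : ℕ} {X X₀ : Finset (Fin v)} {s : ℕ}
    (hX : X.card = i) (hX₀ : X₀.card = i) (hib : i ≤ b)
    (h1 : (X ∩ X₀).card ≤ s) (h2 : s - (X ∩ X₀).card ≤ b - i) :
    (fiber v b X X₀ s).card =
      (i - (X ∩ X₀).card).choose (s - (X ∩ X₀).card) *
      (v - (2 * i - (X ∩ X₀).card)).choose (b - i - (s - (X ∩ X₀).card)) := by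
  set j := (X ∩ X₀).card with hj
  have hji : j ≤ i := by
    rw [hj, ← hX]; exact Finset.card_le_card Finset.inter_subset_left
  have hcs : (X₀ \ X).card = i - j := by
    have h := Finset.card_sdiff_add_card_inter X₀ X
    rw [Finset.inter_comm] at h
    omega
  have hcu : (X ∪ X₀).card = 2 * i - j := by
    have h := Finset.card_inter_add_card_union X X₀
    omega
  have hcc : ((X ∪ X₀)ᶜ).card = v - (2 * i - j) := by
    rw [Finset.card_compl, hcu, Fintype.card_fin]
  rw [← hcs, ← hcc, ← Finset.card_powersetCard, ← Finset.card_powersetCard,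
    ← Finset.card_product]
  apply Finset.card_bij' (fun Y _ => (Y ∩ (X₀ \ X), Y \ (X ∪ X₀)))
    (fun p _ => X ∪ p.1 ∪ p.2)
  · -- forward maps into product
    intro Y hY
    simp only [fiber, mem_filter, Finset.mem_powersetCard_univ] at hY
    obtain ⟨hYb, hXY, hYs⟩ := hY
    have heq : Y ∩ (X₀ \ X) = (Y ∩ X₀) \ (X ∩ X₀) := by
      ext a; simp only [Finset.mem_inter, Finset.mem_sdiff]; tauto
    have hsubj : X ∩ X₀ ⊆ Y ∩ X₀ := inter_subset_inter hXY Finset.Subset.rfl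
    have hc1 : (Y ∩ (X₀ \ X)).card = s - j := by
      rw [heq, Finset.card_sdiff_of_subset hsubj, hYs]
    have hYin : Y ∩ (X ∪ X₀) = X ∪ (Y ∩ X₀) := by
      ext a; simp only [Finset.mem_inter, Finset.mem_union]
      constructor
      · rintro ⟨ha, hb | hb⟩
        · exact Or.inl hb
        · exact Or.inr ⟨ha, hb⟩
      · rintro (ha | ⟨ha, hb⟩)
        · exact ⟨hXY ha, Or.inl ha⟩
        · exact ⟨ha, Or.inr hb⟩
    have hc2' : (X ∪ (Y ∩ X₀)).card = i + s - j := by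
      have h := Finset.card_inter_add_card_union X (Y ∩ X₀)
      have : X ∩ (Y ∩ X₀) = X ∩ X₀ := by
        ext a; simp only [Finset.mem_inter]
        exact ⟨fun ⟨u, _, w⟩ => ⟨u, w⟩, fun ⟨u, w⟩ => ⟨u, hXY u, w⟩⟩
      rw [this] at h
      omega
    have hc2 : (Y \ (X ∪ X₀)).card = b - i - (s - j) := by
      have heq2 : Y \ (X ∪ X₀) = Y \ (Y ∩ (X ∪ X₀)) := by
        ext a; simp only [Finset.mem_sdiff, Finset.mem_inter]; tauto
      have hle : (Y ∩ (X ∪ X₀)).card ≤ Y.card :=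
        Finset.card_le_card Finset.inter_subset_left
      rw [heq2, Finset.card_sdiff_of_subset Finset.inter_subset_left, hYin, hc2', hYb]
      rw [hYin, hc2'] at hle
      omega
    simp only [Finset.mem_product, Finset.mem_powersetCard]
    refine ⟨⟨Finset.inter_subset_right, hc1⟩, ⟨?_, hc2⟩⟩
    intro a ha
    simp only [Finset.mem_sdiff] at ha
    simpa using ha.2
  · -- backward maps into fiber
    rintro ⟨A, B⟩ hp
    simp only [Finset.mem_product, Finset.mem_powersetCard] at hp
    obtain ⟨⟨hA, hAc⟩, ⟨hB, hBc⟩⟩ := hp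
    have hAX : Disjoint X A := by
      apply Finset.disjoint_left.mpr
      intro a ha haA
      exact (Finset.mem_sdiff.mp (hA haA)).2 ha
    have hBXA : Disjoint (X ∪ A) B := by
      apply Finset.disjoint_left.mpr
      intro a ha haB
      have := hB haB
      simp only [Finset.mem_compl, Finset.mem_union] at this
      rcases Finset.mem_union.mp ha with h | h
      · exact this (Or.inl h)
      · exact this (Or.inr ((Finset.mem_sdiff.mp (hA h)).1))
    have hcard : (X ∪ A ∪ B).card = b := by
      rw [Finset.card_union_of_disjoint hBXA, Finset.card_union_of_disjoint hAX,
        hX, hAc, hBc]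
      omega
    have hinter : (X ∪ A ∪ B) ∩ X₀ = (X ∩ X₀) ∪ A := by
      ext a
      simp only [Finset.mem_inter, Finset.mem_union]
      constructor
      · rintro ⟨(h | h) | h, hx0⟩
        · exact Or.inl ⟨h, hx0⟩
        · exact Or.inr h
        · exact absurd (Or.inr hx0) (by simpa using hB h)
      · rintro (⟨h1, h2⟩ | h)
        · exact ⟨Or.inl (Or.inl h1), h2⟩
        · exact ⟨Or.inl (Or.inr h), (Finset.mem_sdiff.mp (hA h)).1⟩
    have hABdisj : Disjoint (X ∩ X₀) A := by
      apply Finset.disjoint_left.mpr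
      intro a ha haA
      exact (Finset.mem_sdiff.mp (hA haA)).2 (Finset.mem_inter.mp ha).1
    simp only [fiber, mem_filter, Finset.mem_powersetCard_univ]
    refine ⟨hcard, ?_, ?_⟩
    · exact (Finset.subset_union_left).trans Finset.subset_union_left
    · rw [hinter, Finset.card_union_of_disjoint hABdisj, hAc]
      omega
  · -- left inverse
    intro Y hY
    simp only [fiber, mem_filter, Finset.mem_powersetCard_univ] at hY
    obtain ⟨hYb, hXY, hYs⟩ := hY
    ext a
    simp only [Finset.mem_union, Finset.mem_inter, Finset.mem_sdiff]
    constructor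
    · rintro ((h | ⟨h, _⟩) | ⟨h, _⟩)
      · exact hXY h
      · exact h
      · exact h
    · intro ha
      by_cases hx : a ∈ X
      · exact Or.inl (Or.inl hx)
      · by_cases hx0 : a ∈ X₀
        · exact Or.inl (Or.inr ⟨ha, hx0, hx⟩)
        · exact Or.inr ⟨ha, by simp [hx, hx0]⟩
  · -- right inverse
    rintro ⟨A, B⟩ hp
    simp only [Finset.mem_product, Finset.mem_powersetCard] at hp
    obtain ⟨⟨hA, hAc⟩, ⟨hB, hBc⟩⟩ := hp
    have e1 : (X ∪ A ∪ B) ∩ (X₀ \ X) = A := by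
      ext a
      simp only [Finset.mem_inter, Finset.mem_union, Finset.mem_sdiff]
      constructor
      · rintro ⟨(h | h) | h, hx0, hx⟩
        · exact absurd h hx
        · exact h
        · exact absurd (by simp [hx0] : a ∈ X ∪ X₀) (by simpa using hB h)
      · intro h
        exact ⟨Or.inl (Or.inr h), Finset.mem_sdiff.mp (hA h)⟩
    have e2 : (X ∪ A ∪ B) \ (X ∪ X₀) = B := by
      ext a
      simp only [Finset.mem_sdiff, Finset.mem_union]
      constructor
      · rintro ⟨(h | h) | h, hnot⟩
        · exact absurd (Or.inl h) hnot
        · exact absurd (Or.inr (Finset.mem_sdiff.mp (hA h)).1) hnot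
        · exact h
      · intro h
        refine ⟨Or.inr h, ?_⟩
        simpa using hB h
    simp only [Prod.mk.injEq]
    exact ⟨e1, e2⟩


def Tmat (v i b : ℕ) : Matrix (Fin (i+1)) (Fin (i+1)) ℚ :=
  fun j s => if (j:ℕ) ≤ s ∧ (s:ℕ) - j ≤ b - i then
    (((i - j).choose ((s:ℕ) - j) * (v - (2*i - j)).choose (b - i - ((s:ℕ) - j)) : ℕ) : ℚ) else 0

lemma Tmat_triangular (v i b : ℕ) : (Tmat v i b).BlockTriangular id := by
  intro p q h
  simp only [id] at h
  have : ¬ ((p:ℕ) ≤ q ∧ (q:ℕ) - p ≤ b - i) := by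
    rw [Fin.lt_def] at h; omega
  simp only [Tmat]
  rw [if_neg this]

lemma Tmat_det_ne_zero {v i b : ℕ} (hib : i ≤ b) (hv : i + b ≤ v) :
    IsUnit (Tmat v i b).det := by
  rw [Matrix.det_of_upperTriangular (Tmat_triangular v i b)]
  rw [isUnit_iff_ne_zero]
  apply Finset.prod_ne_zero_iff.mpr
  intro j _
  have hguard : (j:ℕ) ≤ (j:ℕ) ∧ (j:ℕ) - j ≤ b - i := by omega
  have hjv : (j:ℕ) ≤ i := by omega
  simp only [Tmat]
  rw [if_pos hguard]
  have hpos : 0 < (i - (j:ℕ)).choose ((j:ℕ) - j) * (v - (2*i - j)).choose (b - i - ((j:ℕ) - j)) := by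
    apply Nat.mul_pos <;> apply Nat.choose_pos <;> omega
  exact_mod_cast hpos.ne'


noncomputable def mu (v i b : ℕ) : Fin (i+1) → ℚ :=
  (Tmat v i b)⁻¹.mulVec (Pi.single (Fin.last i) 1)

noncomputable def lam (v i b : ℕ) : ℕ → ℚ :=
  fun s => if h : s < i + 1 then mu v i b ⟨s, h⟩ else 0


lemma fiber_card_eq_Tmat {i b : ℕ} {X X₀ : Finset (Fin v)} (hX : X.card = i)
    (hX₀ : X₀.card = i) (hib : i ≤ b) (hj : (X ∩ X₀).card ≤ i) {s : ℕ} (hs : s < i + 1) :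
    ((fiber v b X X₀ s).card : ℚ)
      = Tmat v i b ⟨(X ∩ X₀).card, by omega⟩ ⟨s, by omega⟩ := by
  set j := (X ∩ X₀).card with hjdef
  simp only [Tmat]
  by_cases h1 : j ≤ s
  · by_cases h2 : s - j ≤ b - i
    · rw [if_pos ⟨h1, h2⟩, count_formula hX hX₀ hib h1 h2]
    · rw [if_neg (by omega), fiber_empty_gt hX h1 (by omega)]
      simp
  · rw [if_neg (by omega), fiber_empty_lt (by omega)]
    simp

lemma Tmat_mulVec_mu {i b : ℕ} (hib : i ≤ b) (hv : i + b ≤ v) :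
    (Tmat v i b).mulVec (mu v i b) = Pi.single (Fin.last i) 1 := by
  rw [mu, Matrix.mulVec_mulVec, Matrix.mul_nonsing_inv _ (Tmat_det_ne_zero hib hv),
    Matrix.one_mulVec]

lemma key {i b : ℕ} (hib : i ≤ b) (hv : i + b ≤ v) {X X₀ : Finset (Fin v)}
    (hX : X.card = i) (hX₀ : X₀.card = i) :
    ∑ Y ∈ (Finset.univ.powersetCard b).filter (fun Y => X ⊆ Y),
        lam v i b ((Y ∩ X₀).card) = if X = X₀ then 1 else 0 := by
  have hj : (X ∩ X₀).card ≤ i := by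
    rw [← hX₀]; exact Finset.card_le_card Finset.inter_subset_right
  have hmaps : ∀ Y ∈ (Finset.univ.powersetCard b).filter (fun Y => X ⊆ Y),
      (Y ∩ X₀).card ∈ Finset.range (i + 1) := by
    intro Y _
    rw [Finset.mem_range]
    have : (Y ∩ X₀).card ≤ X₀.card := Finset.card_le_card Finset.inter_subset_right
    omega
  rw [← Finset.sum_fiberwise_of_maps_to hmaps (fun Y => lam v i b ((Y ∩ X₀).card))]
  have hstep : ∀ s ∈ Finset.range (i + 1),
      (∑ Y ∈ ((Finset.univ.powersetCard b).filter (fun Y => X ⊆ Y)).filter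
          (fun Y => (Y ∩ X₀).card = s), lam v i b ((Y ∩ X₀).card))
        = ((fiber v b X X₀ s).card : ℚ) * lam v i b s := by
    intro s _
    have hset : ((Finset.univ.powersetCard b).filter (fun Y => X ⊆ Y)).filter
        (fun Y => (Y ∩ X₀).card = s) = fiber v b X X₀ s := by
      rw [fiber, Finset.filter_filter]
    rw [hset]
    rw [Finset.sum_congr rfl (fun Y hY => by
      rw [(Finset.mem_filter.mp hY).2.2]
      : ∀ Y ∈ fiber v b X X₀ s, lam v i b ((Y ∩ X₀).card) = lam v i b s)]
    rw [Finset.sum_const, nsmul_eq_mul]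
  rw [Finset.sum_congr rfl hstep]
  have hfin : ∑ s ∈ Finset.range (i + 1), ((fiber v b X X₀ s).card : ℚ) * lam v i b s
      = ∑ s : Fin (i + 1), Tmat v i b ⟨(X ∩ X₀).card, by omega⟩ s * mu v i b s := by
    rw [← Fin.sum_univ_eq_sum_range]
    apply Finset.sum_congr rfl
    intro s _
    rw [fiber_card_eq_Tmat hX hX₀ hib hj s.isLt, lam, dif_pos s.isLt]
  rw [hfin]
  have := congrFun (Tmat_mulVec_mu (v := v) hib hv) ⟨(X ∩ X₀).card, by omega⟩
  rw [Matrix.mulVec, dotProduct] at this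
  rw [this, Pi.single_apply]
  congr 1
  rw [eq_iff_iff]
  constructor
  · intro h
    have hcard : (X ∩ X₀).card = i := by
      have := congrArg Fin.val h
      simpa [Fin.last] using this
    have hXsub : X ∩ X₀ = X := Finset.eq_of_subset_of_card_le Finset.inter_subset_left
      (by omega)
    have : X ⊆ X₀ := by rw [← hXsub]; exact Finset.inter_subset_right
    exact Finset.eq_of_subset_of_card_le this (by omega)
  · rintro rfl
    rw [Finset.inter_self] at *
    exact Fin.ext (by simp [hX, Fin.last])


lemma rows_indep {i b : ℕ} (hib : i ≤ b) (hv : i + b ≤ v)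
    (c : {X : Finset (Fin v) // X.card = i} → ℚ)
    (hc : ∀ Y : {Y : Finset (Fin v) // Y.card = b},
      ∑ X : {X : Finset (Fin v) // X.card = i},
        c X * (if (X : Finset (Fin v)) ⊆ (Y : Finset (Fin v)) then 1 else 0) = 0) :
    c = 0 := by
  funext X₀
  have step1 : ∑ X : {X : Finset (Fin v) // X.card = i},
      c X * (if (X : Finset (Fin v)) = (X₀ : Finset (Fin v)) then (1:ℚ) else 0) = c X₀ := by
    rw [Finset.sum_eq_single X₀]
    · simp
    · intro X _ hne
      rw [if_neg (fun h => hne (Subtype.ext h)), mul_zero]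
    · intro h
      exact absurd (Finset.mem_univ _) h
  have : c X₀ = 0 := by
    rw [← step1]
    calc ∑ X : {X : Finset (Fin v) // X.card = i},
          c X * (if (X : Finset (Fin v)) = (X₀ : Finset (Fin v)) then (1:ℚ) else 0)
        = ∑ X : {X : Finset (Fin v) // X.card = i},
          c X * ∑ Y ∈ (Finset.univ.powersetCard b).filter
              (fun Y => (X : Finset (Fin v)) ⊆ Y), lam v i b ((Y ∩ (X₀ : Finset (Fin v))).card) := by
          refine Finset.sum_congr rfl fun X _ => ?_
          rw [key hib hv X.2 X₀.2]
      _ = ∑ X : {X : Finset (Fin v) // X.card = i}, ∑ Y ∈ Finset.univ.powersetCard b,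
            (if (X : Finset (Fin v)) ⊆ Y then
              c X * lam v i b ((Y ∩ (X₀ : Finset (Fin v))).card) else 0) := by
          refine Finset.sum_congr rfl fun X _ => ?_
          rw [Finset.mul_sum, Finset.sum_filter]
      _ = ∑ Y ∈ Finset.univ.powersetCard b, ∑ X : {X : Finset (Fin v) // X.card = i},
            (if (X : Finset (Fin v)) ⊆ Y then
              c X * lam v i b ((Y ∩ (X₀ : Finset (Fin v))).card) else 0) := Finset.sum_comm
      _ = ∑ Y ∈ Finset.univ.powersetCard b, lam v i b ((Y ∩ (X₀ : Finset (Fin v))).card) *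
            ∑ X : {X : Finset (Fin v) // X.card = i},
              c X * (if (X : Finset (Fin v)) ⊆ Y then 1 else 0) := by
          refine Finset.sum_congr rfl fun Y _ => ?_
          rw [Finset.mul_sum]
          refine Finset.sum_congr rfl fun X _ => ?_
          by_cases h : (X : Finset (Fin v)) ⊆ Y
          · simp only [if_pos h, mul_one]; ring
          · simp only [if_neg h, mul_zero]
      _ = 0 := by
          refine Finset.sum_eq_zero fun Y hY => ?_
          rw [hc ⟨Y, Finset.mem_powersetCard_univ.mp hY⟩, mul_zero]
  simpa using this

lemma rank_of_le {i b : ℕ} (hib : i ≤ b) (hv : i + b ≤ v) :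
    (inclusionMatrixQ v i b).rank = v.choose i := by
  have hinj : Function.Injective (inclusionMatrixQ v i b)ᵀ.mulVecLin := by
    rw [← LinearMap.ker_eq_bot, LinearMap.ker_eq_bot']
    intro c hc0
    apply rows_indep hib hv c
    intro Y
    have h := congrFun hc0 Y
    simp only [mulVecLin_apply, Matrix.mulVec, dotProduct, Matrix.transpose_apply,
      Pi.zero_apply] at h
    have h2 : ∑ X : {X : Finset (Fin v) // X.card = i},
        c X * (if (X : Finset (Fin v)) ⊆ (Y : Finset (Fin v)) then (1:ℚ) else 0)
        = ∑ X : {X : Finset (Fin v) // X.card = i}, inclusionMatrixQ v i b X Y * c X :=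
      Finset.sum_congr rfl fun X _ => mul_comm _ _
    rw [h2]
    exact h
  rw [← Matrix.rank_transpose, Matrix.rank, LinearMap.finrank_range_of_inj hinj,
    Module.finrank_fintype_fun_eq_card, Fintype.card_finset_len, Fintype.card_fin]

lemma choose_le_of_le {i b : ℕ} (hib : i ≤ b) (hv : i + b ≤ v) :
    v.choose i ≤ v.choose b := by
  have h := Matrix.rank_le_card_width (inclusionMatrixQ v i b)
  rw [rank_of_le hib hv] at h
  simpa [Fintype.card_finset_len, Fintype.card_fin] using h


lemma rank_submatrix_equiv {m n m' n' : Type*} [Fintype n] [Fintype n'] [Fintype m]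
    [Fintype m'] (A : Matrix m n ℚ) (e₁ : m' ≃ m) (e₂ : n' ≃ n) :
    (A.submatrix e₁ e₂).rank = A.rank := by
  rw [Matrix.rank, Matrix.rank, Matrix.mulVecLin_submatrix, LinearMap.range_comp,
    LinearMap.range_comp,
    show LinearMap.funLeft ℚ ℚ e₂.symm = (LinearEquiv.funCongrLeft ℚ ℚ e₂.symm : _) from rfl,
    show LinearMap.funLeft ℚ ℚ (e₁ : m' → m) = (LinearEquiv.funCongrLeft ℚ ℚ e₁ : _) from rfl,
    LinearEquiv.range, Submodule.map_top, LinearEquiv.finrank_map_eq]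

def complEquiv (v k : ℕ) (h : k ≤ v) :
    {X : Finset (Fin v) // X.card = k} ≃ {X : Finset (Fin v) // X.card = v - k} where
  toFun X := ⟨(X : Finset (Fin v))ᶜ, by
    rw [Finset.card_compl, X.2, Fintype.card_fin]⟩
  invFun X := ⟨(X : Finset (Fin v))ᶜ, by
    rw [Finset.card_compl, X.2, Fintype.card_fin]; omega⟩
  left_inv X := Subtype.ext (by simp)
  right_inv X := Subtype.ext (by simp)


end GottliebAux

/-- **Gottlieb's theorem**: for `i ≤ b ≤ v`, the inclusion matrix has full rank over a
field of characteristic zero. -/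
theorem gottlieb (v i b : ℕ) (hib : i ≤ b) (hbv : b ≤ v) :
    (inclusionMatrixQ v i b).rank = min (v.choose i) (v.choose b) := by
  rcases le_total (i + b) v with hv | hv
  · rw [GottliebAux.rank_of_le hib hv, min_eq_left (GottliebAux.choose_le_of_le hib hv)]
  · have hib' : v - b ≤ v - i := by omega
    have hv' : (v - b) + (v - i) ≤ v := by omega
    have hsub : inclusionMatrixQ v i b
        = (inclusionMatrixQ v (v - b) (v - i))ᵀ.submatrix
            (GottliebAux.complEquiv v i (hib.trans hbv)) (GottliebAux.complEquiv v b hbv) := by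
      ext X Y
      simp only [Matrix.submatrix_apply, Matrix.transpose_apply, inclusionMatrixQ,
        GottliebAux.complEquiv, Equiv.coe_fn_mk]
      congr 1
      rw [eq_iff_iff, Finset.compl_subset_compl]
    rw [hsub, GottliebAux.rank_submatrix_equiv, Matrix.rank_transpose, GottliebAux.rank_of_le hib' hv',
      Nat.choose_symm hbv]
    have hle := GottliebAux.choose_le_of_le hib' hv'
    rw [Nat.choose_symm hbv, Nat.choose_symm (hib.trans hbv)] at hle
    omega
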